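/- Let Δ : H → H ⊗ H be the unique K-linear map on the free K-vector space H on forests of planar rooted trees such that Δ(|) = 0 and, in Sweedler notation, Δ(x ≻ y) = x₍₁₎ ⊗ (x₍₂₎ ≻ y) + (x ≻ y₍₁₎) ⊗ y₍₂₎ + x ⊗ y and Δ(x * y) = x₍₁₎ ⊗ (x₍₂₎ * y) + (x * y₍₁₎) ⊗ y₍₂₎ + x ⊗ y for all x, y ∈ H. Then Δ respects the grading by number of leaves: for every forest w with n leaves, Δ(w) lies in the subspace Σ_{p+q=n, p,q ≥ 1} H_p ⊗ H_q of H ⊗ H, where H_m denotes the K-linear span of the forests with exactly m leaves. -/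

import Mathlib

open scoped TensorProduct

/-- Planar rooted trees: a tree is either the leaf `|`, or a grafting of at
least two planar rooted trees (`graft t₁ t₂ rest` represents `[t₁, t₂, rest…]`). -/
inductive PTree : Type
  | leaf : PTree
  | graft (t₁ t₂ : PTree) (rest : List PTree) : PTree

/-- A forest is a nonempty word of planar rooted trees. -/
abbrev Forest : Type := {l : List PTree // l ≠ []}

/-- Grafting of a list of trees (only meaningful on lists of length ≥ 2;
on shorter lists we return a junk value, which is never used). -/
def graftList : List PTree → PTree
  | [] => .leaf
  | [a] => a
  | a :: b :: rest => .graft a b rest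

mutual
/-- Number of leaves of a planar rooted tree. -/
def leavesT : PTree → ℕ
  | .leaf => 1
  | .graft a b rest => leavesT a + leavesT b + leavesL rest

/-- Sum of the numbers of leaves of a list of trees. -/
def leavesL : List PTree → ℕ
  | [] => 0
  | t :: ts => leavesT t + leavesL ts
end

/-- Number of leaves of a forest. -/
def leavesF (w : Forest) : ℕ := leavesL w.1

variable (K : Type*) [Field K]

/-- `H K` is the free `K`-vector space with basis the set of forests of
planar rooted trees. -/
abbrev H : Type _ := Forest →₀ K

/-- The leaf, as a (one-tree) forest. -/
def leafF : Forest := ⟨[PTree.leaf], by simp⟩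

/-- The concatenation product `*`, as a bilinear map on `H K`;
on basis forests it is concatenation of words. -/
noncomputable def mulH : H K →ₗ[K] H K →ₗ[K] H K :=
  Finsupp.lift (H K →ₗ[K] H K) K Forest fun x =>
    Finsupp.lift (H K) K Forest fun y =>
      Finsupp.single ⟨x.1 ++ y.1, by simp [x.2]⟩ 1

/-- The grafting operation `≻` on two basis forests:
`(t₁…tₚ) ≻ (s₁…s_q) = Σ_{k=1}^{q} Σ_{i=0}^{p−1}
t₁…t_{p−(i+1)} [t_{p−i},…,tₚ, s₁,…,s_k] s_{k+1}…s_q`. -/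
noncomputable def succForest (x y : Forest) : H K :=
  ∑ k ∈ Finset.range y.1.length, ∑ i ∈ Finset.range x.1.length,
    Finsupp.single
      ⟨x.1.take (x.1.length - (i + 1)) ++
        (graftList (x.1.drop (x.1.length - (i + 1)) ++ y.1.take (k + 1)) :: y.1.drop (k + 1)),
        by simp⟩ 1

/-- The operation `≻`, as a bilinear map on `H K`. -/
noncomputable def succH : H K →ₗ[K] H K →ₗ[K] H K :=
  Finsupp.lift (H K →ₗ[K] H K) K Forest fun x =>
    Finsupp.lift (H K) K Forest fun y => succForest K x y

/-- A shortcut instance (definitionally the standard one) to help elaboration. -/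
noncomputable instance : Zero (H K ⊗[K] H K) :=
  (inferInstance : AddCommMonoid (H K ⊗[K] H K)).toZero

/-- `Hgr K m` is the homogeneous component of `H K` of degree `m`: the linear span
of the basis forests with exactly `m` leaves. -/
noncomputable def Hgr (m : ℕ) : Submodule K (H K) :=
  Submodule.span K {f : H K | ∃ w : Forest, leavesF w = m ∧ f = Finsupp.single w 1}

lemma leavesT_pos (t : PTree) : 1 ≤ leavesT t := by
  cases t with
  | leaf => simp [leavesT]
  | graft a b rest => have := leavesT_pos a; simp [leavesT]; omega

lemma leavesL_append (a b : List PTree) : leavesL (a ++ b) = leavesL a + leavesL b := by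
  induction a with
  | nil => simp [leavesL]
  | cons t ts ih => simp [leavesL, ih]; ring

lemma leavesL_pos {l : List PTree} (h : l ≠ []) : 1 ≤ leavesL l := by
  cases l with
  | nil => simp at h
  | cons t ts => have := leavesT_pos t; simp [leavesL]; omega

lemma leavesT_graftList {l : List PTree} (h : l ≠ []) : leavesT (graftList l) = leavesL l := by
  match l with
  | [a] => simp [graftList, leavesL]
  | a :: b :: rest => simp [graftList, leavesT, leavesL]; ring

variable {K}

lemma single_mem_Hgr (w : Forest) : Finsupp.single w (1:K) ∈ Hgr K (leavesF w) :=
  Submodule.subset_span ⟨w, rfl, rfl⟩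

lemma mulH_single (x y : Forest) :
    mulH K (Finsupp.single x 1) (Finsupp.single y 1)
      = Finsupp.single ⟨x.1 ++ y.1, by simp [x.2]⟩ 1 := by
  simp [mulH, Finsupp.lift_apply, Finsupp.sum_single_index]

lemma succH_single (x y : Forest) :
    succH K (Finsupp.single x 1) (Finsupp.single y 1) = succForest K x y := by
  simp [succH, Finsupp.lift_apply, Finsupp.sum_single_index]

lemma mulH_single_mem (x y : Forest) :
    mulH K (Finsupp.single x 1) (Finsupp.single y (1:K)) ∈ Hgr K (leavesF x + leavesF y) := by
  rw [mulH_single]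
  refine Submodule.subset_span ⟨_, ?_, rfl⟩
  simp [leavesF, leavesL_append]

lemma succForest_mem (x y : Forest) :
    succForest K x y ∈ Hgr K (leavesF x + leavesF y) := by
  refine Submodule.sum_mem _ fun k hk => Submodule.sum_mem _ fun i hi => ?_
  refine Submodule.subset_span ⟨_, ?_, rfl⟩
  simp only [Finset.mem_range] at hi
  have hd : x.1.drop (x.1.length - (i+1)) ≠ [] := by
    intro h
    have := congrArg List.length h
    simp at this
    omega
  simp only [leavesF, leavesL_append, leavesL]
  rw [leavesT_graftList (by simp [hd]), leavesL_append]
  have h1 : leavesL (x.1.take (x.1.length - (i+1))) + leavesL (x.1.drop (x.1.length - (i+1)))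
      = leavesL x.1 := by rw [← leavesL_append, List.take_append_drop]
  have h2 : leavesL (y.1.take (k+1)) + leavesL (y.1.drop (k+1)) = leavesL y.1 := by
    rw [← leavesL_append, List.take_append_drop]
  omega

lemma succH_single_mem (x y : Forest) :
    succH K (Finsupp.single x 1) (Finsupp.single y (1:K)) ∈ Hgr K (leavesF x + leavesF y) := by
  rw [succH_single]; exact succForest_mem x y

/-- A bilinear map whose values on basis forests are graded maps the graded pieces correctly. -/
lemma bilin_grade (B : H K →ₗ[K] H K →ₗ[K] H K)
    (hB : ∀ x y : Forest, B (Finsupp.single x 1) (Finsupp.single y 1)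
        ∈ Hgr K (leavesF x + leavesF y)) :
    ∀ p q : ℕ, ∀ u ∈ Hgr K p, ∀ v ∈ Hgr K q, B u v ∈ Hgr K (p + q) := by
  intro p q u hu
  have step1 : ∀ x : Forest, leavesF x = p → ∀ v ∈ Hgr K q,
      B (Finsupp.single x 1) v ∈ Hgr K (p + q) := by
    intro x hx v hv
    have hle : Hgr K q ≤ Submodule.comap (B (Finsupp.single x 1)) (Hgr K (p + q)) := by
      refine Submodule.span_le.2 ?_
      rintro f ⟨wy, hwy, rfl⟩
      have := hB x wy
      rw [hx, hwy] at this
      exact this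
    exact hle hv
  intro v hv
  have : Hgr K p ≤ Submodule.comap (B.flip v) (Hgr K (p + q)) := by
    refine Submodule.span_le.2 ?_
    rintro f ⟨wx, hwx, rfl⟩
    exact step1 wx hwx v hv
  exact this hu

variable (K) in
/-- The degree-`n` part of `H ⊗ H`. -/
noncomputable def Spn (n : ℕ) : Submodule K (H K ⊗[K] H K) :=
  ⨆ (p : ℕ) (q : ℕ) (_ : p + q = n) (_ : 1 ≤ p) (_ : 1 ≤ q),
    Submodule.span K
      (Set.image2 (fun a b => a ⊗ₜ[K] b) (Hgr K p : Set (H K)) (Hgr K q : Set (H K)))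

lemma span_le_Spn {p q n : ℕ} (h : p + q = n) (hp : 1 ≤ p) (hq : 1 ≤ q) :
    Submodule.span K
      (Set.image2 (fun a b => a ⊗ₜ[K] b) (Hgr K p : Set (H K)) (Hgr K q : Set (H K)))
      ≤ Spn K n := by
  rw [Spn]
  exact le_iSup_of_le p (le_iSup_of_le q (le_iSup_of_le h (le_iSup_of_le hp
    (le_iSup_of_le hq le_rfl))))

lemma tmul_mem_Spn {p q n : ℕ} (h : p + q = n) (hp : 1 ≤ p) (hq : 1 ≤ q)
    {a b : H K} (ha : a ∈ Hgr K p) (hb : b ∈ Hgr K q) : a ⊗ₜ[K] b ∈ Spn K n :=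
  span_le_Spn h hp hq (Submodule.subset_span (Set.mem_image2_of_mem ha hb))

lemma lTensor_Spn (f : H K →ₗ[K] H K) (β : ℕ)
    (hf : ∀ q : ℕ, ∀ v ∈ Hgr K q, f v ∈ Hgr K (q + β)) {α : ℕ} {u : H K ⊗[K] H K}
    (hu : u ∈ Spn K α) : LinearMap.lTensor (H K) f u ∈ Spn K (α + β) := by
  have : Submodule.map (LinearMap.lTensor (H K) f) (Spn K α) ≤ Spn K (α + β) := by
    rw [Spn]
    simp only [Submodule.map_iSup]
    refine iSup_le fun p => iSup_le fun q => iSup_le fun hpq => iSup_le fun hp =>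
      iSup_le fun hq => ?_
    rw [Submodule.map_span]
    refine le_trans (Submodule.span_mono ?_) (span_le_Spn (by omega) hp (by omega)
      (p := p) (q := q + β))
    rintro _ ⟨_, ⟨a, ha, b, hb, rfl⟩, rfl⟩
    exact Set.mem_image2_of_mem ha (hf q b hb)
  exact this ⟨u, hu, rfl⟩

lemma rTensor_Spn (f : H K →ₗ[K] H K) (α : ℕ)
    (hf : ∀ p : ℕ, ∀ v ∈ Hgr K p, f v ∈ Hgr K (α + p)) {β : ℕ} {u : H K ⊗[K] H K}
    (hu : u ∈ Spn K β) : LinearMap.rTensor (H K) f u ∈ Spn K (α + β) := by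
  have : Submodule.map (LinearMap.rTensor (H K) f) (Spn K β) ≤ Spn K (α + β) := by
    rw [Spn]
    simp only [Submodule.map_iSup]
    refine iSup_le fun p => iSup_le fun q => iSup_le fun hpq => iSup_le fun hp =>
      iSup_le fun hq => ?_
    rw [Submodule.map_span]
    refine le_trans (Submodule.span_mono ?_) (span_le_Spn (by omega) (by omega) hq
      (p := α + p) (q := q))
    rintro _ ⟨_, ⟨a, ha, b, hb, rfl⟩, rfl⟩
    exact Set.mem_image2_of_mem (hf p a ha) hb
  exact this ⟨u, hu, rfl⟩

lemma leavesF_pos (w : Forest) : 1 ≤ leavesF w := leavesL_pos w.2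

/-- Key combination step: the right-hand side of the compatibility formulas is graded. -/
lemma key_step (B : H K →ₗ[K] H K →ₗ[K] H K)
    (hB : ∀ p q : ℕ, ∀ u ∈ Hgr K p, ∀ v ∈ Hgr K q, B u v ∈ Hgr K (p + q))
    {α β : ℕ} (a b : Forest) (ha : leavesF a = α) (hb : leavesF b = β)
    {Δa Δb : H K ⊗[K] H K} (hΔa : Δa ∈ Spn K α) (hΔb : Δb ∈ Spn K β) :
    LinearMap.lTensor (H K) (B.flip (Finsupp.single b 1)) Δa
      + LinearMap.rTensor (H K) (B (Finsupp.single a 1)) Δb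
      + Finsupp.single a 1 ⊗ₜ[K] Finsupp.single b 1 ∈ Spn K (α + β) := by
  have hα : 1 ≤ α := ha ▸ leavesF_pos a
  have hβ : 1 ≤ β := hb ▸ leavesF_pos b
  have hamem : Finsupp.single a (1:K) ∈ Hgr K α := ha ▸ single_mem_Hgr a
  have hbmem : Finsupp.single b (1:K) ∈ Hgr K β := hb ▸ single_mem_Hgr b
  refine Submodule.add_mem _ (Submodule.add_mem _ ?_ ?_) ?_
  · exact lTensor_Spn _ β (fun q v hv => hB q β v hv _ hbmem) hΔa
  · exact rTensor_Spn _ α (fun p v hv => hB α p _ hamem v hv) hΔb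
  · exact tmul_mem_Spn rfl hα hβ hamem hbmem

lemma succForest_graft (t₁ t₂ : PTree) (rest : List PTree) :
    succForest K ⟨[t₁], by simp⟩ ⟨t₂ :: rest, by simp⟩
      = ∑ k ∈ Finset.range (rest.length + 1),
          Finsupp.single ⟨PTree.graft t₁ t₂ (rest.take k) :: rest.drop k, by simp⟩ (1:K) := by
  simp only [succForest, List.length_singleton, List.length_cons, Finset.sum_range_one,
    Nat.sub_self, List.take_zero, List.drop_zero, List.nil_append, List.singleton_append,
    List.take_succ_cons, List.drop_succ_cons, graftList, List.length_nil, Nat.zero_add,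
    Nat.add_sub_cancel]

/-- `Δ` respects the grading by the number of leaves: for a
forest `w` with `n` leaves, `Δ(w)` lies in `Σ_{p+q=n, p,q ≥ 1} H_p ⊗ H_q ⊆ H ⊗ H`. -/
theorem stmt7 (K : Type*) [Field K] (Δ : H K →ₗ[K] H K ⊗[K] H K)
    (h0 : Δ (Finsupp.single leafF 1) = 0)
    (hsucc : ∀ x y : H K, Δ (succH K x y)
        = LinearMap.lTensor (H K) ((succH K).flip y) (Δ x)
          + LinearMap.rTensor (H K) (succH K x) (Δ y) + x ⊗ₜ[K] y)
    (hmul : ∀ x y : H K, Δ (mulH K x y)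
        = LinearMap.lTensor (H K) ((mulH K).flip y) (Δ x)
          + LinearMap.rTensor (H K) (mulH K x) (Δ y) + x ⊗ₜ[K] y) :
    ∀ w : Forest, Δ (Finsupp.single w (1 : K)) ∈
      ⨆ (p : ℕ) (q : ℕ) (_ : p + q = leavesF w) (_ : 1 ≤ p) (_ : 1 ≤ q),
        Submodule.span K
          (Set.image2 (fun a b => a ⊗ₜ[K] b) (Hgr K p : Set (H K)) (Hgr K q : Set (H K))) := by
  have hBmul : ∀ p q : ℕ, ∀ u ∈ Hgr K p, ∀ v ∈ Hgr K q, mulH K u v ∈ Hgr K (p + q) :=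
    bilin_grade _ fun x y => mulH_single_mem x y
  have hBsucc : ∀ p q : ℕ, ∀ u ∈ Hgr K p, ∀ v ∈ Hgr K q, succH K u v ∈ Hgr K (p + q) :=
    bilin_grade _ fun x y => succH_single_mem x y
  suffices h : ∀ N : ℕ, ∀ w : Forest,
      2 * leavesF w + (if w.1.length = 1 then 1 else 0) ≤ N →
      Δ (Finsupp.single w 1) ∈ Spn K (leavesF w) by
    intro w
    have := h _ w le_rfl
    rw [Spn] at this
    exact this
  intro N
  induction N with
  | zero => intro w hw; have := leavesF_pos w; omega
  | succ N IH =>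
    intro w hw
    obtain ⟨l, hl⟩ := w
    cases l with
    | nil => exact absurd rfl hl
    | cons t ts =>
      cases ts with
      | cons t' rest =>
        -- concatenation case: w = t :: t' :: rest, length ≥ 2
        have pa : ([t] : List PTree) ≠ [] := by simp
        have pb : (t' :: rest : List PTree) ≠ [] := by simp
        have e1 : leavesF (⟨[t], pa⟩ : Forest) = leavesT t := by
          simp [leavesF, leavesL]
        have e2 : leavesF (⟨t' :: rest, pb⟩ : Forest) = leavesT t' + leavesL rest := by
          simp [leavesF, leavesL]
        have e3 : leavesF (⟨t :: t' :: rest, hl⟩ : Forest)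
            = leavesT t + (leavesT t' + leavesL rest) := by
          simp [leavesF, leavesL]
        have hw' : 2 * (leavesT t + (leavesT t' + leavesL rest)) ≤ N + 1 := by
          rw [if_neg (by simp)] at hw
          omega
        have p1 := leavesT_pos t
        have p2 := leavesT_pos t'
        have hΔa : Δ (Finsupp.single (⟨[t], pa⟩ : Forest) 1)
            ∈ Spn K (leavesF (⟨[t], pa⟩ : Forest)) := by
          refine IH _ ?_
          rw [if_pos (by simp), e1]
          omega
        have hΔb : Δ (Finsupp.single (⟨t' :: rest, pb⟩ : Forest) 1)
            ∈ Spn K (leavesF (⟨t' :: rest, pb⟩ : Forest)) := by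
          refine IH _ ?_
          have : (if (⟨t' :: rest, pb⟩ : Forest).1.length = 1 then 1 else 0) ≤ 1 := by
            split <;> omega
          rw [e2]
          omega
        have hrw : Finsupp.single (⟨t :: t' :: rest, hl⟩ : Forest) (1:K)
            = mulH K (Finsupp.single (⟨[t], pa⟩ : Forest) 1)
                (Finsupp.single (⟨t' :: rest, pb⟩ : Forest) 1) := by
          rw [mulH_single]
          rfl
        rw [hrw, hmul]
        have := key_step (mulH K) hBmul (⟨[t], pa⟩ : Forest) (⟨t' :: rest, pb⟩ : Forest)
          rfl rfl hΔa hΔb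
        rwa [show leavesF (⟨[t], pa⟩ : Forest) + leavesF (⟨t' :: rest, pb⟩ : Forest)
          = leavesF (⟨t :: t' :: rest, hl⟩ : Forest) by rw [e1, e2, e3]] at this
      | nil =>
        cases t with
        | leaf =>
          rw [show (⟨[PTree.leaf], hl⟩ : Forest) = leafF from rfl, h0]
          exact Submodule.zero_mem _
        | graft t₁ t₂ rest =>
          have pa : ([t₁] : List PTree) ≠ [] := by simp
          have pb : (t₂ :: rest : List PTree) ≠ [] := by simp
          have e1 : leavesF (⟨[t₁], pa⟩ : Forest) = leavesT t₁ := by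
            simp [leavesF, leavesL]
          have e2 : leavesF (⟨t₂ :: rest, pb⟩ : Forest) = leavesT t₂ + leavesL rest := by
            simp [leavesF, leavesL]
          have e3 : leavesF (⟨[PTree.graft t₁ t₂ rest], hl⟩ : Forest)
            = leavesT t₁ + (leavesT t₂ + leavesL rest) := by
            simp [leavesF, leavesL, leavesT]
            ring
          have e4 : ∀ k : ℕ,
              leavesF (⟨PTree.graft t₁ t₂ (rest.take k) :: rest.drop k, by simp⟩ : Forest)
              = leavesT t₁ + (leavesT t₂ + leavesL rest) := by
            intro k
            have hsplit : leavesL (rest.take k) + leavesL (rest.drop k) = leavesL rest := by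
              rw [← leavesL_append, List.take_append_drop]
            simp [leavesF, leavesL, leavesT]
            omega
          have p1 := leavesT_pos t₁
          have p2 := leavesT_pos t₂
          have hw' : 2 * (leavesT t₁ + (leavesT t₂ + leavesL rest)) + 1 ≤ N + 1 := by
            rw [if_pos (by simp), e3] at hw
            omega
          have hΔa : Δ (Finsupp.single (⟨[t₁], pa⟩ : Forest) 1)
              ∈ Spn K (leavesF (⟨[t₁], pa⟩ : Forest)) := by
            refine IH _ ?_
            rw [if_pos (by simp), e1]
            omega
          have hΔb : Δ (Finsupp.single (⟨t₂ :: rest, pb⟩ : Forest) 1)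
              ∈ Spn K (leavesF (⟨t₂ :: rest, pb⟩ : Forest)) := by
            refine IH _ ?_
            have : (if (⟨t₂ :: rest, pb⟩ : Forest).1.length = 1 then 1 else 0) ≤ 1 := by
              split <;> omega
            rw [e2]
            omega
          have heq : Finsupp.single (⟨[PTree.graft t₁ t₂ rest], hl⟩ : Forest) (1:K)
              = succForest K (⟨[t₁], pa⟩ : Forest) (⟨t₂ :: rest, pb⟩ : Forest)
                - ∑ k ∈ Finset.range rest.length,
                    Finsupp.single
                      ⟨PTree.graft t₁ t₂ (rest.take k) :: rest.drop k, by simp⟩ (1:K) := by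
            rw [succForest_graft, Finset.sum_range_succ]
            simp only [List.take_length, List.drop_length]
            abel
          have m1 : LinearMap.lTensor (H K)
                ((succH K).flip (Finsupp.single (⟨t₂ :: rest, pb⟩ : Forest) 1))
                (Δ (Finsupp.single (⟨[t₁], pa⟩ : Forest) 1))
              + LinearMap.rTensor (H K) (succH K (Finsupp.single (⟨[t₁], pa⟩ : Forest) 1))
                (Δ (Finsupp.single (⟨t₂ :: rest, pb⟩ : Forest) 1))
              + Finsupp.single (⟨[t₁], pa⟩ : Forest) (1:K)
                  ⊗ₜ[K] Finsupp.single (⟨t₂ :: rest, pb⟩ : Forest) (1:K)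
              ∈ Spn K (leavesF (⟨[PTree.graft t₁ t₂ rest], hl⟩ : Forest)) := by
            have := key_step (succH K) hBsucc (⟨[t₁], pa⟩ : Forest) (⟨t₂ :: rest, pb⟩ : Forest)
              rfl rfl hΔa hΔb
            rwa [show leavesF (⟨[t₁], pa⟩ : Forest) + leavesF (⟨t₂ :: rest, pb⟩ : Forest)
              = leavesF (⟨[PTree.graft t₁ t₂ rest], hl⟩ : Forest) by rw [e1, e2, e3]] at this
          have m2 : Δ (∑ k ∈ Finset.range rest.length,
                Finsupp.single
                  ⟨PTree.graft t₁ t₂ (rest.take k) :: rest.drop k, by simp⟩ (1:K))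
              ∈ Spn K (leavesF (⟨[PTree.graft t₁ t₂ rest], hl⟩ : Forest)) := by
            rw [map_sum]
            refine Submodule.sum_mem _ fun k hk => ?_
            simp only [Finset.mem_range] at hk
            have hcor := IH (⟨PTree.graft t₁ t₂ (rest.take k) :: rest.drop k, by simp⟩ : Forest)
              (by
                rw [if_neg (by simp [List.length_drop]; omega), e4 k]
                omega)
            rwa [e4 k, ← e3] at hcor
          rw [heq, map_sub, ← succH_single, hsucc]
          exact @Submodule.sub_mem K (H K ⊗[K] H K) _ _ _
            (Spn K (leavesF (⟨[PTree.graft t₁ t₂ rest], hl⟩ : Forest))) _ _ m1 m2
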